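/- Let $f$ be analytic and nonvanishing on the disk $\mathcal{D}(z_0,r_0)\subset\mathbb{C}$, and let $M\ge e$ satisfy $\sup_{z\in\mathcal{D}(z_0,r_0)}|f(z)|\le M$ and $|f(z_0)|\ge M^{-1}$. Set $r_1=(1+\log M)^{-2}r_0$. Then there is an absolute constant $C$ such that $|f(z)|\le C|f(z_0)|$ for all $z\in\mathcal{D}(z_0,r_1)$. -/

import Mathlib

open Metric Set intervalIntegral Complex

/-- Existence of a holomorphic logarithm on a ball. -/
lemma exists_log_ball {f : ℂ → ℂ} {z₀ : ℂ} {r₀ : ℝ}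
    (hd : DifferentiableOn ℂ f (Metric.ball z₀ r₀))
    (hne : ∀ z ∈ Metric.ball z₀ r₀, f z ≠ 0) :
    ∃ g : ℂ → ℂ, DifferentiableOn ℂ g (Metric.ball z₀ r₀) ∧ g z₀ = 0 ∧
      ∀ z ∈ Metric.ball z₀ r₀, f z = f z₀ * Complex.exp (g z) := by
  set s := Metric.ball z₀ r₀ with hs
  have hso : IsOpen s := isOpen_ball
  set F : ℂ → ℂ := fun z => deriv f z / f z with hF
  have han : AnalyticOnNhd ℂ f s := hd.analyticOnNhd hso
  have hFc : ContinuousOn F s :=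
    (han.deriv.continuousOn).div hd.continuousOn hne
  set τ : ℝ → ℝ := fun t => max 0 (min t 1) with hτdef
  have hτc : Continuous τ := continuous_const.max (continuous_id.min continuous_const)
  have hτ01 : ∀ t, τ t ∈ Icc (0:ℝ) 1 :=
    fun t => ⟨le_max_left _ _, max_le (by norm_num) (min_le_right _ _)⟩
  have hτ_eq : ∀ t ∈ Icc (0:ℝ) 1, τ t = t := by
    intro t ht
    simp [hτdef, min_eq_left ht.2, max_eq_right ht.1]
  set γ : ℂ → ℝ → ℂ := fun z t => z₀ + τ t • (z - z₀) with hγdef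
  have hγmem : ∀ z ∈ s, ∀ t : ℝ, γ z t ∈ s := by
    intro z hz t
    have hz' : ‖z - z₀‖ < r₀ := by simpa [hs, mem_ball, dist_eq_norm] using hz
    simp only [hγdef, hs, mem_ball, dist_eq_norm, add_sub_cancel_left]
    calc ‖τ t • (z - z₀)‖ = |τ t| * ‖z - z₀‖ := by rw [norm_smul, Real.norm_eq_abs]
    _ ≤ 1 * ‖z - z₀‖ := by
        apply mul_le_mul_of_nonneg_right _ (norm_nonneg _)
        rw [_root_.abs_of_nonneg (hτ01 t).1]; exact (hτ01 t).2
    _ < r₀ := by simpa using hz'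
  set g : ℂ → ℂ := fun z => ∫ t in (0:ℝ)..1, (z - z₀) * F (γ z t) with hg
  have hIc : ∀ z ∈ s, Continuous (fun t : ℝ => (z - z₀) * F (γ z t)) := by
    intro z hz
    apply continuous_const.mul
    exact hFc.comp_continuous
      (continuous_const.add (hτc.smul continuous_const)) (fun t => hγmem z hz t)
  -- key identity : f z = f z₀ * exp (g z)
  have hgz₀ : g z₀ = 0 := by simp [hg]
  have hkey : ∀ z ∈ s, f z = f z₀ * Complex.exp (g z) := by
    intro z hz
    set c : ℂ := z - z₀ with hc
    set I : ℝ → ℂ := fun t => c * F (γ z t) with hI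
    have hIcont : Continuous I := hIc z hz
    set φ : ℝ → ℂ := fun u => ∫ t in (0:ℝ)..u, I t with hφ
    have hφd : ∀ u : ℝ, HasDerivAt φ (I u) u := fun u =>
      (hIcont.integral_hasStrictDerivAt 0 u).hasDerivAt
    have hφc : Continuous φ :=
      continuous_iff_continuousAt.2 fun u => (hφd u).continuousAt
    set ψ : ℝ → ℂ := fun u => f (γ z u) * Complex.exp (-φ u) with hψ
    have hγc : Continuous (γ z) := continuous_const.add (hτc.smul continuous_const)
    have hψc : ContinuousOn ψ (Icc 0 1) := by
      apply ContinuousOn.mul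
      · exact (hd.continuousOn.comp_continuous hγc (fun t => hγmem z hz t)).continuousOn
      · exact ((hφc.neg).cexp).continuousOn
    have hψd : ∀ u ∈ Ico (0:ℝ) 1, HasDerivWithinAt ψ 0 (Ici u) u := by
      intro u hu
      have hγu : γ z u ∈ s := hγmem z hz u
      have hfu : f (γ z u) ≠ 0 := hne _ hγu
      have hfd : HasDerivAt f (deriv f (γ z u)) (γ z u) :=
        (hd.differentiableAt (hso.mem_nhds hγu)).hasDerivAt
      -- τ has derivative 1 within Ici u
      have hIcc_mem : Icc (0:ℝ) 1 ∈ nhdsWithin u (Ici u) := by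
        rw [mem_nhdsWithin]
        refine ⟨Iio 1, isOpen_Iio, hu.2, fun t ht => ⟨le_trans hu.1 ht.2, le_of_lt ht.1⟩⟩
      have hτd : HasDerivWithinAt τ 1 (Ici u) u := by
        have h1 : HasDerivWithinAt (fun t : ℝ => t) 1 (Icc 0 1) u :=
          (hasDerivAt_id u).hasDerivWithinAt
        have h2 : HasDerivWithinAt τ 1 (Icc 0 1) u :=
          h1.congr (fun t ht => hτ_eq t ht) (hτ_eq u ⟨hu.1, le_of_lt hu.2⟩)
        exact h2.mono_of_mem_nhdsWithin hIcc_mem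
      have hγd : HasDerivWithinAt (γ z) c (Ici u) u := by
        have := (hasDerivWithinAt_const u (Ici u) z₀).add (hτd.smul_const c)
        simp at this; exact this
      have hfγd : HasDerivWithinAt (fun t => f (γ z t)) (c * deriv f (γ z u)) (Ici u) u := by
        have := (hfd.hasFDerivAt.restrictScalars ℝ).comp_hasDerivWithinAt u hγd
        simp [Function.comp] at this; exact this
      have hed : HasDerivWithinAt (fun t => Complex.exp (-φ t))
          (Complex.exp (-φ u) * (-I u)) (Ici u) u :=
        ((hφd u).hasDerivWithinAt.neg).cexp
      have := hfγd.mul hed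
      refine this.congr_deriv ?_
      rw [hI, hF]
      field_simp
      ring
    have h10 := constant_of_has_deriv_right_zero hψc hψd 1 (by norm_num)
    have hγ0 : γ z 0 = z₀ := by simp [hγdef, hτdef]
    have hγ1 : γ z 1 = z := by simp [hγdef, hτdef]
    have hφ0 : φ 0 = 0 := by simp [hφ]
    have hφ1 : φ 1 = g z := by simp [hφ, hg, hI, hc]
    rw [hψ] at h10
    simp only [hγ0, hγ1, hφ0, hφ1, neg_zero, Complex.exp_zero, mul_one] at h10
    have hexp : Complex.exp (-g z) ≠ 0 := Complex.exp_ne_zero _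
    field_simp [Complex.exp_neg] at h10 ⊢
    rw [← h10, mul_assoc, ← Complex.exp_add, neg_add_cancel, Complex.exp_zero, mul_one]
  -- continuity of g on s
  have hgc : ContinuousOn g s := by
    rw [hg, continuousOn_iff_continuous_restrict]
    apply continuous_parametric_intervalIntegral_of_continuous'
    have : Continuous fun p : s × ℝ => z₀ + τ p.2 • ((p.1 : ℂ) - z₀) :=
      continuous_const.add ((hτc.comp continuous_snd).smul
        ((continuous_subtype_val.comp continuous_fst).sub continuous_const))
    exact ((continuous_subtype_val.comp continuous_fst).sub continuous_const).mul
      (hFc.comp_continuous this (fun p => hγmem _ p.1.2 p.2))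
  -- differentiability of g on s
  have hgd : DifferentiableOn ℂ g s := by
    intro w hw
    have hgw : ContinuousAt g w := hgc.continuousAt (hso.mem_nhds hw)
    have hexp : HasStrictDerivAt Complex.exp (Complex.exp (g w)) (g w) :=
      Complex.hasStrictDerivAt_exp (g w)
    have hexp' : Complex.exp (g w) ≠ 0 := Complex.exp_ne_zero _
    set L := hexp.localInverse Complex.exp _ _ hexp' with hL
    have hLd : HasStrictDerivAt L (Complex.exp (g w))⁻¹ (Complex.exp (g w)) :=
      hexp.to_localInverse hexp'
    have hleft : ∀ᶠ x in nhds (g w), L (Complex.exp x) = x :=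
      (hexp.hasStrictFDerivAt_equiv hexp').eventually_left_inverse
    have hr₀ : (0:ℝ) < r₀ := Metric.nonempty_ball.1 ⟨w, hw⟩
    have hfz₀ : f z₀ ≠ 0 := hne z₀ (Metric.mem_ball_self hr₀)
    have hev : ∀ᶠ z in nhds w, g z = L (f z / f z₀) := by
      filter_upwards [hgw.eventually hleft, hso.mem_nhds hw] with z h1 h2
      have : Complex.exp (g z) = f z / f z₀ := by
        rw [hkey z h2]; field_simp
      rw [← this, h1]
    have hfdw : DifferentiableAt ℂ (fun z => f z / f z₀) w :=
      (hd.differentiableAt (hso.mem_nhds hw)).div_const _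
    have hLdw : DifferentiableAt ℂ L (f w / f z₀) := by
      have : Complex.exp (g w) = f w / f z₀ := by
        rw [hkey w hw]; field_simp
      rw [← this]
      exact hLd.hasDerivAt.differentiableAt
    have : DifferentiableAt ℂ (fun z => L (f z / f z₀)) w := hLdw.comp w hfdw
    exact (this.congr_of_eventuallyEq hev).differentiableWithinAt
  exact ⟨g, hgd, hgz₀, hkey⟩

theorem stmt1 :
    ∃ C : ℝ, 0 < C ∧
      ∀ (f : ℂ → ℂ) (z₀ : ℂ) (r₀ M : ℝ),
        0 < r₀ → Real.exp 1 ≤ M →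
        DifferentiableOn ℂ f (Metric.ball z₀ r₀) →
        (∀ z ∈ Metric.ball z₀ r₀, f z ≠ 0) →
        (∀ z ∈ Metric.ball z₀ r₀, ‖f z‖ ≤ M) →
        M⁻¹ ≤ ‖f z₀‖ →
        ∀ z ∈ Metric.ball z₀ (((1 + Real.log M) ^ 2)⁻¹ * r₀),
          ‖f z‖ ≤ C * ‖f z₀‖ := by
  refine ⟨Real.exp 4, Real.exp_pos 4, ?_⟩
  intro f z₀ r₀ M hr₀ hM hd hne hbound hlow z hz
  have hM0 : (0:ℝ) < M := lt_of_lt_of_le (Real.exp_pos 1) hM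
  set l : ℝ := Real.log M with hldef
  have hl : 1 ≤ l := by
    rw [hldef, ← Real.log_exp 1]
    exact Real.log_le_log (Real.exp_pos 1) hM
  have hP : (0:ℝ) < (1 + l) ^ 2 := by positivity
  have hP4 : (4:ℝ) ≤ (1 + l) ^ 2 := by nlinarith
  -- z is in the big ball
  have hzball : z ∈ Metric.ball z₀ r₀ := by
    rw [Metric.mem_ball] at hz ⊢
    calc dist z z₀ < ((1 + l) ^ 2)⁻¹ * r₀ := hz
    _ ≤ 1 * r₀ := by
        apply mul_le_mul_of_nonneg_right _ hr₀.le
        rw [inv_le_one_iff₀]; right; linarith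
    _ = r₀ := one_mul r₀
  have hz₀ball : z₀ ∈ Metric.ball z₀ r₀ := Metric.mem_ball_self hr₀
  have hfz₀ : f z₀ ≠ 0 := hne z₀ hz₀ball
  have hfz₀pos : 0 < ‖f z₀‖ := norm_pos_iff.2 hfz₀
  obtain ⟨g, hgd, hgz0, hkey⟩ := exists_log_ball hd hne
  -- norm identity
  have hnorm : ∀ w ∈ Metric.ball z₀ r₀, ‖f w‖ = ‖f z₀‖ * Real.exp ((g w).re) := by
    intro w hw
    rw [hkey w hw, norm_mul, Complex.norm_exp]
  -- bound on real part of g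
  have hre : ∀ w ∈ Metric.ball z₀ r₀, (g w).re ≤ 2 * l := by
    intro w hw
    have h1 : ‖f z₀‖ * Real.exp ((g w).re) ≤ M := (hnorm w hw) ▸ hbound w hw
    have h2 : M⁻¹ * Real.exp ((g w).re) ≤ M := by
      calc M⁻¹ * Real.exp ((g w).re) ≤ ‖f z₀‖ * Real.exp ((g w).re) :=
            mul_le_mul_of_nonneg_right hlow (Real.exp_pos _).le
      _ ≤ M := h1
    have h3 : Real.exp ((g w).re) ≤ M ^ 2 := by
      have := mul_le_mul_of_nonneg_left h2 hM0.le
      calc Real.exp ((g w).re) = M * (M⁻¹ * Real.exp ((g w).re)) := by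
            field_simp
      _ ≤ M * M := mul_le_mul_of_nonneg_left h2 hM0.le
      _ = M ^ 2 := (sq M).symm
    have h4 : Real.exp (2 * l) = M ^ 2 := by
      rw [two_mul, Real.exp_add, hldef, Real.exp_log hM0, sq]
    exact Real.exp_le_exp.1 (by rw [h4]; exact h3)
  -- the auxiliary Möbius-type map
  set b : ℝ := 4 * l with hbdef
  have hDne : ∀ w ∈ Metric.ball z₀ r₀, (b : ℂ) - g w ≠ 0 := by
    intro w hw h0
    have : ((b : ℂ) - g w).re = 0 := by rw [h0]; rfl
    simp only [Complex.sub_re, Complex.ofReal_re] at this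
    have := hre w hw
    nlinarith [this]
  set φ : ℂ → ℂ := fun w => g w / ((b : ℂ) - g w) with hφdef
  have hφd : DifferentiableOn ℂ φ (Metric.ball z₀ r₀) :=
    hgd.div ((differentiableOn_const _).sub hgd) hDne
  have hφz₀ : φ z₀ = 0 := by simp [hφdef, hgz0]
  have hφle : ∀ w ∈ Metric.ball z₀ r₀, ‖φ w‖ ≤ 1 := by
    intro w hw
    have hD : (0:ℝ) < ‖(b : ℂ) - g w‖ := norm_pos_iff.2 (hDne w hw)
    rw [hφdef]
    simp only [norm_div]
    rw [div_le_one hD]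
    have e1 : ‖g w‖ ^ 2 = (g w).re ^ 2 + (g w).im ^ 2 := by
      rw [Complex.sq_norm, Complex.normSq_apply]; ring
    have e2 : ‖(b : ℂ) - g w‖ ^ 2 = (b - (g w).re) ^ 2 + (g w).im ^ 2 := by
      rw [Complex.sq_norm, Complex.normSq_apply]
      simp [Complex.sub_re, Complex.sub_im]
      ring
    have hx := hre w hw
    nlinarith [norm_nonneg (g w), hD, hl]
  have hmaps : Set.MapsTo φ (Metric.ball z₀ r₀) (Metric.ball (φ z₀) 2) := by
    intro w hw
    rw [Metric.mem_ball, hφz₀, dist_zero_right]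
    exact lt_of_le_of_lt (hφle w hw) one_lt_two
  have hsch := Complex.dist_le_div_mul_dist_of_mapsTo_ball hφd (hmaps.mono_right Metric.ball_subset_closedBall) hzball
  rw [hφz₀, dist_zero_right] at hsch
  have hT : ‖φ z‖ ≤ 2 / (1 + l) ^ 2 := by
    calc ‖φ z‖ ≤ 2 / r₀ * dist z z₀ := hsch
    _ ≤ 2 / r₀ * (((1 + l) ^ 2)⁻¹ * r₀) := by
        apply mul_le_mul_of_nonneg_left (le_of_lt (Metric.mem_ball.1 hz))
        positivity
    _ = 2 / (1 + l) ^ 2 := by field_simp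
  -- bound ‖g z‖ ≤ 4
  have hgφ : g z = φ z * ((b : ℂ) - g z) := by
    rw [hφdef]
    field_simp [hDne z hzball]
  have hDle : ‖(b : ℂ) - g z‖ ≤ b + ‖g z‖ := by
    calc ‖(b : ℂ) - g z‖ ≤ ‖(b : ℂ)‖ + ‖g z‖ := norm_sub_le _ _
    _ = b + ‖g z‖ := by
        rw [Complex.norm_real, Real.norm_eq_abs, _root_.abs_of_nonneg (by linarith : (0:ℝ) ≤ b)]
  have hgz4 : ‖g z‖ ≤ 4 := by
    have h5 : ‖g z‖ ≤ ‖φ z‖ * (b + ‖g z‖) := by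
      calc ‖g z‖ = ‖φ z‖ * ‖(b : ℂ) - g z‖ := by
            conv_lhs => rw [hgφ]
            rw [norm_mul]
      _ ≤ ‖φ z‖ * (b + ‖g z‖) :=
          mul_le_mul_of_nonneg_left hDle (norm_nonneg _)
    have hTP : ‖φ z‖ * (1 + l) ^ 2 ≤ 2 := (le_div_iff₀ hP).1 hT
    have hu0 : (0:ℝ) ≤ ‖g z‖ := norm_nonneg _
    have hT0 : (0:ℝ) ≤ ‖φ z‖ := norm_nonneg _
    nlinarith [mul_le_mul_of_nonneg_right hTP (by linarith : (0:ℝ) ≤ b + ‖g z‖),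
      mul_le_mul_of_nonneg_left h5 hP.le]
  have hre4 : (g z).re ≤ 4 := le_trans (Complex.re_le_norm (g z)) hgz4
  calc ‖f z‖ = ‖f z₀‖ * Real.exp ((g z).re) := hnorm z hzball
  _ ≤ ‖f z₀‖ * Real.exp 4 := by
      apply mul_le_mul_of_nonneg_left (Real.exp_le_exp.2 hre4) hfz₀pos.le
  _ = Real.exp 4 * ‖f z₀‖ := mul_comm _ _
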